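/- Let r ≥ s ≥ 3 with r ≤ ⌊(5s−1)/3⌋ − 1, and let A ⊆ [1, 6s − 5] with |A| ≥ 5s − 4. If Δ : A → {1,2} is any 2-coloring, then either (i) there exists a monochromatic r-element subset S ⊆ A with diam(S) ≥ 3s − 3, or (ii) there exist monochromatic sets S₁, S₂ ⊆ A with |S₁| = s, |S₂| = r, max(S₁) < min(S₂), and diam(S₁) ≤ diam(S₂). -/

import Mathlib

open Finset

/-- diameter of a finite set of naturals -/
def diam (S : Finset ℕ) : ℕ := (S.max.getD 0) - (S.min.getD 0)

/-- S is monochromatic under a coloring -/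
def Mono {α : Type*} (f : ℕ → α) (S : Finset ℕ) : Prop := ∀ a ∈ S, ∀ b ∈ S, f a = f b

/-- S is zero-sum mod m under an integer coloring -/
def ZeroSum (f : ℕ → ℤ) (m : ℕ) (S : Finset ℕ) : Prop := (m : ℤ) ∣ ∑ x ∈ S, f x

/-- every element of S colored ∞ (= none) -/
def InftyMono (f : ℕ → Option ℤ) (S : Finset ℕ) : Prop := ∀ x ∈ S, f x = none

/-- S consists of ℤ-colored elements and is zero-sum mod m -/
def ZeroSumOpt (f : ℕ → Option ℤ) (m : ℕ) (S : Finset ℕ) : Prop :=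
  (∀ x ∈ S, (f x).isSome) ∧ (m : ℤ) ∣ ∑ x ∈ S, (f x).getD 0

lemma diam_eq (S : Finset ℕ) (h : S.Nonempty) : diam S = S.max' h - S.min' h := by
  unfold diam
  rw [← Finset.coe_max' h, ← Finset.coe_min' h]
  rfl

lemma card_le_diam (S : Finset ℕ) (h : S.Nonempty) : S.card ≤ diam S + 1 := by
  have hsub : S ⊆ Finset.Icc (S.min' h) (S.max' h) := fun x hx =>
    Finset.mem_Icc.mpr ⟨S.min'_le x hx, S.le_max' x hx⟩
  have := Finset.card_le_card hsub
  rw [Nat.card_Icc] at this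
  rw [diam_eq S h]
  omega

/-- one can take the top `k` elements of a finset of naturals -/
lemma exists_top_subset : ∀ (k : ℕ) (L : Finset ℕ), k ≤ L.card →
    ∃ S, S ⊆ L ∧ S.card = k ∧ ∀ x ∈ L, x ∉ S → ∀ y ∈ S, x < y := by
  intro k
  induction k with
  | zero => intro L _; exact ⟨∅, empty_subset _, card_empty, by simp⟩
  | succ n ih =>
    intro L hk
    have hLne : L.Nonempty := card_pos.mp (by omega)
    set M := L.max' hLne with hM
    obtain ⟨S, hS, hScard, hStop⟩ := ih (L.erase M)
      (by rw [card_erase_of_mem (L.max'_mem hLne)]; omega)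
    refine ⟨insert M S, ?_, ?_, ?_⟩
    · intro x hx
      rcases mem_insert.mp hx with rfl | h
      · exact L.max'_mem hLne
      · exact (erase_subset _ _) (hS h)
    · rw [card_insert_of_notMem (fun h => (mem_erase.mp (hS h)).1 rfl), hScard]
    · intro x hx hxS y hy
      have hxM : x ≠ M := fun h => hxS (h ▸ mem_insert_self _ _)
      rcases mem_insert.mp hy with rfl | hyS
      · exact lt_of_le_of_ne (L.le_max' x hx) hxM
      · exact hStop x (mem_erase.mpr ⟨hxM, hx⟩) (fun h => hxS (mem_insert_of_mem h)) y hyS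

/-- a subset of prescribed size containing the extremes, hence of full diameter -/
lemma exists_subset_diam_eq (C : Finset ℕ) (k : ℕ) (h2 : 2 ≤ k) (hk : k ≤ C.card)
    (hC : C.Nonempty) (hd : 0 < diam C) :
    ∃ S, S ⊆ C ∧ S.card = k ∧ diam S = diam C := by
  have hmm : C.min' hC < C.max' hC := by
    have := diam_eq C hC; omega
  have hpair : ({C.min' hC, C.max' hC} : Finset ℕ) ⊆ C := by
    intro x hx
    rcases mem_insert.mp hx with rfl | hx
    · exact C.min'_mem hC
    · rw [mem_singleton.mp hx]; exact C.max'_mem hC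
  have hpaircard : ({C.min' hC, C.max' hC} : Finset ℕ).card = 2 := by
    rw [card_insert_of_notMem (by simp [Nat.ne_of_lt hmm]), card_singleton]
  obtain ⟨T, hT, hTcard⟩ := Finset.exists_subset_card_eq
    (s := C \ {C.min' hC, C.max' hC}) (n := k - 2)
    (by rw [card_sdiff_of_subset hpair, hpaircard]; omega)
  refine ⟨insert (C.min' hC) (insert (C.max' hC) T), ?_, ?_, ?_⟩
  · intro x hx
    rcases mem_insert.mp hx with rfl | hx
    · exact C.min'_mem hC
    · rcases mem_insert.mp hx with rfl | hx
      · exact C.max'_mem hC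
      · exact (sdiff_subset) (hT hx)
  · have hmaxT : C.max' hC ∉ T := fun h => by
      have := hT h; rw [mem_sdiff] at this
      exact this.2 (by simp)
    have hminT : C.min' hC ∉ insert (C.max' hC) T := by
      intro h
      rcases mem_insert.mp h with h | h
      · omega
      · have := hT h; rw [mem_sdiff] at this
        exact this.2 (by simp)
    rw [card_insert_of_notMem hminT, card_insert_of_notMem hmaxT, hTcard]
    omega
  · set S : Finset ℕ := insert (C.min' hC) (insert (C.max' hC) T) with hSdef
    have hSsub : S ⊆ C := by
      intro x hx
      rcases mem_insert.mp hx with rfl | hx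
      · exact C.min'_mem hC
      · rcases mem_insert.mp hx with rfl | hx
        · exact C.max'_mem hC
        · exact (sdiff_subset) (hT hx)
    have hSne : S.Nonempty := ⟨C.min' hC, mem_insert_self _ _⟩
    have hmin : S.min' hSne = C.min' hC :=
      le_antisymm (S.min'_le _ (mem_insert_self _ _)) (min'_subset hSne hSsub)
    have hmax : S.max' hSne = C.max' hC :=
      le_antisymm (max'_subset hSne hSsub)
        (S.le_max' _ (mem_insert_of_mem (mem_insert_self _ _)))
    rw [diam_eq S hSne, diam_eq C hC, hmin, hmax]

lemma fin2_eq {a b c : Fin 2} (ha : a ≠ c) (hb : b ≠ c) : a = b := by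
  have h1 : a.val < 2 := a.isLt
  have h2 : b.val < 2 := b.isLt
  have h3 : c.val < 2 := c.isLt
  have h4 : a.val ≠ c.val := fun h => ha (Fin.ext h)
  have h5 : b.val ≠ c.val := fun h => hb (Fin.ext h)
  exact Fin.ext (by omega)

theorem stmt11 (s r : ℕ) (hs : 3 ≤ s) (hsr : s ≤ r) (hr : r ≤ (5 * s - 1) / 3 - 1)
    (A : Finset ℕ) (hA : A ⊆ Finset.Icc 1 (6 * s - 5)) (hAcard : 5 * s - 4 ≤ A.card)
    (Δ : ℕ → Fin 2) :
    (∃ S : Finset ℕ, S ⊆ A ∧ Mono Δ S ∧ S.card = r ∧ 3 * s - 3 ≤ diam S) ∨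
    (∃ S₁ S₂ : Finset ℕ, S₁ ⊆ A ∧ S₂ ⊆ A ∧ Mono Δ S₁ ∧ Mono Δ S₂ ∧
      S₁.card = s ∧ S₂.card = r ∧ (∀ a ∈ S₁, ∀ b ∈ S₂, a < b) ∧ diam S₁ ≤ diam S₂) := by
  have hr2s : r ≤ 2 * s - 1 := by omega
  have hAne : A.Nonempty := card_pos.mp (by omega)
  set a0 := A.min' hAne with ha0
  set c := Δ a0 with hc
  set C0 : Finset ℕ := A.filter (fun x => Δ x = c) with hC0
  set C1 : Finset ℕ := A.filter (fun x => ¬ Δ x = c) with hC1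
  have hsplit : C0.card + C1.card = A.card :=
    Finset.card_filter_add_card_filter_not _
  have hC0A : C0 ⊆ A := filter_subset _ _
  have hC1A : C1 ⊆ A := filter_subset _ _
  have hC0mono : Mono Δ C0 := by
    intro x hx y hy
    rw [(mem_filter.mp hx).2, (mem_filter.mp hy).2]
  have hC1mono : Mono Δ C1 := by
    intro x hx y hy
    exact fin2_eq (mem_filter.mp hx).2 (mem_filter.mp hy).2
  -- case (i) escapes
  by_cases h0 : r ≤ C0.card ∧ 3 * s - 3 ≤ diam C0
  · left
    obtain ⟨S, hS, hScard, hSdiam⟩ := exists_subset_diam_eq C0 r (by omega) h0.1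
      (card_pos.mp (by omega)) (by omega)
    exact ⟨S, hS.trans hC0A, fun x hx y hy => hC0mono x (hS hx) y (hS hy), hScard, by omega⟩
  by_cases h1 : r ≤ C1.card ∧ 3 * s - 3 ≤ diam C1
  · left
    obtain ⟨S, hS, hScard, hSdiam⟩ := exists_subset_diam_eq C1 r (by omega) h1.1
      (card_pos.mp (by omega)) (by omega)
    exact ⟨S, hS.trans hC1A, fun x hx y hy => hC1mono x (hS hx) y (hS hy), hScard, by omega⟩
  right
  push_neg at h0 h1
  -- each class has card ≤ 3s-3
  have hcard0 : C0.card ≤ 3 * s - 3 := by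
    by_contra hcon
    have hne : C0.Nonempty := card_pos.mp (by omega)
    have := card_le_diam C0 hne
    have hd : 3 * s - 3 ≤ diam C0 := by omega
    have := h0 (by omega)
    omega
  have hcard1 : C1.card ≤ 3 * s - 3 := by
    by_contra hcon
    have hne : C1.Nonempty := card_pos.mp (by omega)
    have := card_le_diam C1 hne
    have hd : 3 * s - 3 ≤ diam C1 := by omega
    have := h1 (by omega)
    omega
  have hcard0' : 2 * s - 1 ≤ C0.card := by omega
  have hcard1' : 2 * s - 1 ≤ C1.card := by omega
  have hdiam0 : diam C0 ≤ 3 * s - 4 := by have := h0 (by omega); omega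
  have hdiam1 : diam C1 ≤ 3 * s - 4 := by have := h1 (by omega); omega
  have hC0ne : C0.Nonempty := card_pos.mp (by omega)
  have hC1ne : C1.Nonempty := card_pos.mp (by omega)
  -- bounds on A
  have hminA : 1 ≤ a0 := (Finset.mem_Icc.mp (hA (A.min'_mem hAne))).1
  set aM := A.max' hAne with haM
  have hmaxA : aM ≤ 6 * s - 5 := (Finset.mem_Icc.mp (hA (A.max'_mem hAne))).2
  have hdiamA : A.card ≤ aM - a0 + 1 := by
    have := card_le_diam A hAne
    rw [diam_eq A hAne] at this
    omega
  -- max A is in C1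
  have ha0C0 : a0 ∈ C0 := mem_filter.mpr ⟨A.min'_mem hAne, rfl⟩
  have hmaxC1 : aM ∈ C1 := by
    rw [hC1, mem_filter]
    refine ⟨A.max'_mem hAne, fun hcol => ?_⟩
    have hMC0 : aM ∈ C0 := mem_filter.mpr ⟨A.max'_mem hAne, hcol⟩
    have h1 : C0.min' hC0ne ≤ a0 := C0.min'_le _ ha0C0
    have h2 : aM ≤ C0.max' hC0ne := C0.le_max' _ hMC0
    have := diam_eq C0 hC0ne
    omega
  have hmaxC1' : C1.max' hC1ne = aM :=
    le_antisymm (by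
      have := max'_subset hC1ne hC1A
      omega) (C1.le_max' _ hmaxC1)
  set m1 := C1.min' hC1ne with hm1
  have hdiamC1 : diam C1 = aM - m1 := by
    rw [diam_eq C1 hC1ne, hmaxC1']
  have hm1A : m1 ∈ A := hC1A (C1.min'_mem hC1ne)
  have hm1le : m1 ≤ aM := A.le_max' _ hm1A
  -- diam C1 ≥ 2s - 2
  have hdC1big : 2 * s - 2 ≤ diam C1 := by
    have := card_le_diam C1 hC1ne
    omega
  -- the left part L
  set L : Finset ℕ := A.filter (fun x => x < m1) with hL
  have hLsplit : L.card + (A.filter (fun x => ¬ x < m1)).card = A.card :=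
    Finset.card_filter_add_card_filter_not _
  have hRsub : (A.filter (fun x => ¬ x < m1)) ⊆ Finset.Icc m1 aM := by
    intro x hx
    rw [mem_filter] at hx
    exact Finset.mem_Icc.mpr ⟨by omega, A.le_max' _ hx.1⟩
  have hRcard : (A.filter (fun x => ¬ x < m1)).card ≤ aM - m1 + 1 := by
    have := Finset.card_le_card hRsub
    rw [Nat.card_Icc] at this
    omega
  have hLcard : 2 * s - 1 ≤ L.card := by omega
  -- all of L has color c
  have hLcol : ∀ x ∈ L, Δ x = c := by
    intro x hx
    rw [hL, mem_filter] at hx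
    by_contra hcol
    have : x ∈ C1 := mem_filter.mpr ⟨hx.1, hcol⟩
    have := C1.min'_le x this
    omega
  -- S₁ = top s of L
  obtain ⟨S₁, hS₁L, hS₁card, hS₁top⟩ := exists_top_subset s L (by omega)
  have hS₁ne : S₁.Nonempty := card_pos.mp (by omega)
  have hS₁A : S₁ ⊆ A := hS₁L.trans (filter_subset _ _)
  -- bound on min' S₁ : L \ S₁ ⊆ Ico a0 (min' S₁)
  have hbot : (L \ S₁) ⊆ Finset.Ico a0 (S₁.min' hS₁ne) := by
    intro x hx
    rw [mem_sdiff] at hx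
    refine Finset.mem_Ico.mpr ⟨A.min'_le x ((filter_subset _ _) hx.1), ?_⟩
    exact hS₁top x hx.1 hx.2 _ (S₁.min'_mem hS₁ne)
  have hbotcard : L.card - s ≤ S₁.min' hS₁ne - a0 := by
    have h1 := Finset.card_le_card hbot
    rw [Nat.card_Ico, card_sdiff_of_subset hS₁L, hS₁card] at h1
    exact h1
  have hS₁max : S₁.max' hS₁ne < m1 := by
    have := hS₁L (S₁.max'_mem hS₁ne)
    rw [hL, mem_filter] at this
    exact this.2
  have hS₁diam : diam S₁ ≤ 2 * s - 2 := by
    rw [diam_eq S₁ hS₁ne]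
    have hmins : a0 ≤ S₁.min' hS₁ne := A.min'_le _ (hS₁A (S₁.min'_mem hS₁ne))
    omega
  -- S₂ : r elements of C1 of full diameter
  obtain ⟨S₂, hS₂C1, hS₂card, hS₂diam⟩ := exists_subset_diam_eq C1 r (by omega)
    (by omega) hC1ne (by omega)
  refine ⟨S₁, S₂, hS₁A, hS₂C1.trans hC1A, ?_, ?_, hS₁card, hS₂card, ?_, ?_⟩
  · intro x hx y hy
    rw [hLcol x (hS₁L hx), hLcol y (hS₁L hy)]
  · intro x hx y hy
    exact hC1mono x (hS₂C1 hx) y (hS₂C1 hy)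
  · intro a ha b hb
    have h1 : a ≤ S₁.max' hS₁ne := S₁.le_max' a ha
    have h2 : m1 ≤ b := C1.min'_le b (hS₂C1 hb)
    omega
  · omega
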